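/- Let F be an infinite field with char(F) = p > 2. Then C(UT_2(F), ⋆) = Id(UT_2(F), ⋆) + ⟨z_1z_2⟩^{TS(*)} + ⟨y_1^p⟩^{TS(*)}; that is, a polynomial f ∈ F⟨Y∪Z⟩ is *-central for (UT_2(F), ⋆) if and only if f is a sum of a *-polynomial identity for (UT_2(F), ⋆), an F-linear combination of products uv with u, v skew polynomials, and an F-linear combination of p-th powers g^p with g a symmetric polynomial. -/

import Mathlib

open scoped BigOperators

set_option maxHeartbeats 1000000
set_option synthInstance.maxHeartbeats 400000

/-- The algebra of 2×2 upper triangular matrices over `F`. -/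
def UT2 (F : Type*) [Field F] : Subalgebra F (Matrix (Fin 2) (Fin 2) F) where
  carrier := {M | M 1 0 = 0}
  mul_mem' := by
    intro a b ha hb
    simp only [Set.mem_setOf_eq] at *
    rw [Matrix.mul_apply, Fin.sum_univ_two, ha, hb]
    ring
  one_mem' := by simp [Matrix.one_apply]
  add_mem' := by
    intro a b ha hb
    simp only [Set.mem_setOf_eq] at *
    simp [Matrix.add_apply, ha, hb]
  zero_mem' := by simp
  algebraMap_mem' := by
    intro r
    simp [Matrix.algebraMap_matrix_apply]

theorem mem_UT2 (F : Type*) [Field F] {M : Matrix (Fin 2) (Fin 2) F} :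
    M ∈ UT2 F ↔ M 1 0 = 0 := Iff.rfl

/-- The involution `⋆` on `UT2 F`: `(a c; 0 b) ↦ (b c; 0 a)`. -/
def starUT (F : Type*) [Field F] (M : ↥(UT2 F)) : ↥(UT2 F) :=
  ⟨!![M.1 1 1, M.1 0 1; 0, M.1 0 0], by rw [mem_UT2]; simp⟩

/-- The involution `s` on `UT2 F`: `(a c; 0 b) ↦ (b -c; 0 a)`. -/
def starS (F : Type*) [Field F] (M : ↥(UT2 F)) : ↥(UT2 F) :=
  ⟨!![M.1 1 1, -(M.1 0 1); 0, M.1 0 0], by rw [mem_UT2]; simp⟩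

/-- The free unital associative `F`-algebra `F⟨Y ∪ Z⟩` on the variables
`y_0, y_1, …` (indexed by `Sum.inl`) and `z_0, z_1, …` (indexed by `Sum.inr`). -/
abbrev FA (F : Type*) [Field F] := FreeAlgebra F (ℕ ⊕ ℕ)

noncomputable def yv (F : Type*) [Field F] (i : ℕ) : FA F := FreeAlgebra.ι F (Sum.inl i)
noncomputable def zv (F : Type*) [Field F] (i : ℕ) : FA F := FreeAlgebra.ι F (Sum.inr i)

noncomputable def fStarAux (F : Type*) [Field F] : FA F →ₐ[F] (FA F)ᵐᵒᵖ :=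
  FreeAlgebra.lift F fun v =>
    MulOpposite.op (Sum.elim (fun i => FreeAlgebra.ι F (Sum.inl i))
      (fun i => -FreeAlgebra.ι F (Sum.inr i)) v)

/-- The involution `*` on `F⟨Y ∪ Z⟩`: the unique `F`-linear anti-automorphism
with `y_i* = y_i` and `z_i* = -z_i`. -/
noncomputable def fStar (F : Type*) [Field F] (f : FA F) : FA F := (fStarAux F f).unop

/-- A symmetric polynomial of `F⟨Y ∪ Z⟩`. -/
def IsSym (F : Type*) [Field F] (f : FA F) : Prop := fStar F f = f
/-- A skew polynomial of `F⟨Y ∪ Z⟩`. -/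
def IsSkew (F : Type*) [Field F] (f : FA F) : Prop := fStar F f = -f

/-- A substitution relative to an involution `σ` on `UT2 F`: an algebra homomorphism
sending each `y_i` to a symmetric element and each `z_i` to a skew-symmetric element. -/
def IsSubstWith (F : Type*) [Field F] (σ : ↥(UT2 F) → ↥(UT2 F))
    (φ : FA F →ₐ[F] ↥(UT2 F)) : Prop :=
  (∀ i, σ (φ (yv F i)) = φ (yv F i)) ∧ (∀ i, σ (φ (zv F i)) = -(φ (zv F i)))

/-- The `*`-polynomial identities of `(UT2 F, σ)`. -/
def IdWith (F : Type*) [Field F] (σ : ↥(UT2 F) → ↥(UT2 F)) : Submodule F (FA F) where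
  carrier := {f | ∀ φ : FA F →ₐ[F] ↥(UT2 F), IsSubstWith F σ φ → φ f = 0}
  add_mem' := by
    intro a b ha hb φ hφ
    rw [map_add, ha φ hφ, hb φ hφ, add_zero]
  zero_mem' := by intro φ _; exact map_zero φ
  smul_mem' := by
    intro c x hx φ hφ
    rw [map_smul, hx φ hφ, smul_zero]

/-- The `*`-central polynomials of `(UT2 F, σ)`. -/
def CWith (F : Type*) [Field F] (σ : ↥(UT2 F) → ↥(UT2 F)) : Submodule F (FA F) where
  carrier := {f | ∀ φ : FA F →ₐ[F] ↥(UT2 F), IsSubstWith F σ φ →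
    φ f ∈ Subalgebra.center F ↥(UT2 F)}
  add_mem' := by
    intro a b ha hb φ hφ
    rw [map_add]; exact add_mem (ha φ hφ) (hb φ hφ)
  zero_mem' := by intro φ _; rw [map_zero]; exact zero_mem _
  smul_mem' := by
    intro c x hx φ hφ
    rw [map_smul]; exact Subalgebra.smul_mem _ (hx φ hφ) c

/-- `⟨z₁z₂⟩^{TS(*)}`: the `F`-linear span of all products of two skew polynomials. -/
def TSz (F : Type*) [Field F] : Submodule F (FA F) :=
  Submodule.span F {f : FA F | ∃ u v, IsSkew F u ∧ IsSkew F v ∧ f = u * v}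


/-! ### Generic model -/

section Generic

variable (F : Type*) [Field F]

abbrev VV : Type := ℕ ⊕ (ℕ ⊕ ℕ)

def vA (i : ℕ) : VV := Sum.inl i
def vB (i : ℕ) : VV := Sum.inr (Sum.inl i)
def vC (i : ℕ) : VV := Sum.inr (Sum.inr i)

abbrev RR := MvPolynomial VV F

/-- upper triangular 2×2 matrices over `RR F` as an `F`-subalgebra. -/
def UTR : Subalgebra F (Matrix (Fin 2) (Fin 2) (RR F)) where
  carrier := {M | M 1 0 = 0}
  mul_mem' := by
    intro a b ha hb
    simp only [Set.mem_setOf_eq] at *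
    rw [Matrix.mul_apply, Fin.sum_univ_two, ha, hb]
    ring
  one_mem' := by simp [Matrix.one_apply]
  add_mem' := by
    intro a b ha hb
    simp only [Set.mem_setOf_eq] at *
    simp [Matrix.add_apply, ha, hb]
  zero_mem' := by simp
  algebraMap_mem' := by
    intro r
    simp [Matrix.algebraMap_matrix_apply]

theorem mem_UTR {M : Matrix (Fin 2) (Fin 2) (RR F)} : M ∈ UTR F ↔ M 1 0 = 0 := Iff.rfl

theorem UTR10 (M : ↥(UTR F)) : M.1 1 0 = 0 := M.2

theorem UTRmul00 (M N : ↥(UTR F)) : (M * N).1 0 0 = M.1 0 0 * N.1 0 0 := by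
  show (M.1 * N.1) 0 0 = _
  rw [Matrix.mul_apply, Fin.sum_univ_two, UTR10, mul_zero, add_zero]

theorem UTRmul11 (M N : ↥(UTR F)) : (M * N).1 1 1 = M.1 1 1 * N.1 1 1 := by
  show (M.1 * N.1) 1 1 = _
  rw [Matrix.mul_apply, Fin.sum_univ_two, UTR10, zero_mul, zero_add]

theorem UTRmul01 (M N : ↥(UTR F)) :
    (M * N).1 0 1 = M.1 0 0 * N.1 0 1 + M.1 0 1 * N.1 1 1 := by
  show (M.1 * N.1) 0 1 = _
  rw [Matrix.mul_apply, Fin.sum_univ_two]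

theorem UTRone (i : Fin 2) : (1 : ↥(UTR F)).1 i i = 1 := by
  show (1 : Matrix (Fin 2) (Fin 2) (RR F)) i i = 1
  simp [Matrix.one_apply]

theorem UTRone01 : (1 : ↥(UTR F)).1 0 1 = 0 := by
  show (1 : Matrix (Fin 2) (Fin 2) (RR F)) 0 1 = 0
  simp [Matrix.one_apply]

theorem UTRalg (r : F) (i : Fin 2) :
    ((algebraMap F ↥(UTR F)) r).1 i i = algebraMap F (RR F) r := by
  show (algebraMap F (Matrix (Fin 2) (Fin 2) (RR F)) r) i i = _
  simp [Matrix.algebraMap_matrix_apply]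

theorem UTRalg01 (r : F) : ((algebraMap F ↥(UTR F)) r).1 0 1 = 0 := by
  show (algebraMap F (Matrix (Fin 2) (Fin 2) (RR F)) r) 0 1 = 0
  simp [Matrix.algebraMap_matrix_apply]

/-- generic symmetric element -/
noncomputable def Ygen (i : ℕ) : ↥(UTR F) :=
  ⟨!![MvPolynomial.X (vA i), MvPolynomial.X (vC i); 0, MvPolynomial.X (vA i)], by
    rw [mem_UTR]; simp⟩

/-- generic skew element -/
noncomputable def Zgen (i : ℕ) : ↥(UTR F) :=
  ⟨!![MvPolynomial.X (vB i), 0; 0, -MvPolynomial.X (vB i)], by rw [mem_UTR]; simp⟩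

/-- The generic substitution. -/
noncomputable def Phi : FA F →ₐ[F] ↥(UTR F) :=
  FreeAlgebra.lift F (Sum.elim (Ygen F) (Zgen F))

@[simp] theorem Phi_y (i : ℕ) : Phi F (yv F i) = Ygen F i := by
  simp [Phi, yv, FreeAlgebra.lift_ι_apply]

@[simp] theorem Phi_z (i : ℕ) : Phi F (zv F i) = Zgen F i := by
  simp [Phi, zv, FreeAlgebra.lift_ι_apply]

/-- top-left entry as an algebra hom. -/
noncomputable def d0 : ↥(UTR F) →ₐ[F] RR F where
  toFun M := M.1 0 0
  map_one' := UTRone F 0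
  map_mul' M N := UTRmul00 F M N
  map_zero' := rfl
  map_add' M N := rfl
  commutes' r := UTRalg F r 0

/-- bottom-right entry as an algebra hom. -/
noncomputable def d1 : ↥(UTR F) →ₐ[F] RR F where
  toFun M := M.1 1 1
  map_one' := UTRone F 1
  map_mul' M N := UTRmul11 F M N
  map_zero' := rfl
  map_add' M N := rfl
  commutes' r := UTRalg F r 1

/-- top-right entry as a linear map. -/
noncomputable def tau : ↥(UTR F) →ₗ[F] RR F where
  toFun M := M.1 0 1
  map_add' M N := rfl
  map_smul' c M := rfl

end Generic
section StarFacts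

variable (F : Type*) [Field F]

theorem fStar_add (a b : FA F) : fStar F (a + b) = fStar F a + fStar F b := by
  simp [fStar, map_add]

theorem fStar_smul (c : F) (a : FA F) : fStar F (c • a) = c • fStar F a := by
  simp [fStar, map_smul]

theorem fStar_mul (a b : FA F) : fStar F (a * b) = fStar F b * fStar F a := by
  simp [fStar, map_mul]

theorem fStar_algebraMap (r : F) :
    fStar F (algebraMap F (FA F) r) = algebraMap F (FA F) r := by
  simp [fStar, AlgHom.commutes, MulOpposite.algebraMap_apply]

theorem fStar_one : fStar F 1 = 1 := by
  simpa using fStar_algebraMap F 1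

theorem fStar_y (i : ℕ) : fStar F (yv F i) = yv F i := by
  simp [fStar, fStarAux, yv, FreeAlgebra.lift_ι_apply]

theorem fStar_z (i : ℕ) : fStar F (zv F i) = -zv F i := by
  simp [fStar, fStarAux, zv, FreeAlgebra.lift_ι_apply]

theorem fStar_fStar (f : FA F) : fStar F (fStar F f) = f := by
  induction f using FreeAlgebra.induction with
  | grade0 r => rw [fStar_algebraMap, fStar_algebraMap]
  | grade1 x =>
    cases x with
    | inl i =>
      have := fStar_y F i
      rw [show FreeAlgebra.ι F (Sum.inl i : ℕ ⊕ ℕ) = yv F i from rfl, this, this]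
    | inr i =>
      rw [show FreeAlgebra.ι F (Sum.inr i : ℕ ⊕ ℕ) = zv F i from rfl, fStar_z]
      rw [show fStar F (-zv F i) = -fStar F (zv F i) by
        simpa using fStar_smul F (-1) (zv F i), fStar_z, neg_neg]
  | mul a b ha hb => rw [fStar_mul, fStar_mul, ha, hb]
  | add a b ha hb => rw [fStar_add, fStar_add, ha, hb]

/-- the star on the generic model -/
noncomputable def sR (M : ↥(UTR F)) : ↥(UTR F) :=
  ⟨!![M.1 1 1, M.1 0 1; 0, M.1 0 0], by rw [mem_UTR]; simp⟩

theorem sR_entries (M : ↥(UTR F)) :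
    (sR F M).1 0 0 = M.1 1 1 ∧ (sR F M).1 0 1 = M.1 0 1 ∧ (sR F M).1 1 1 = M.1 0 0 := by
  refine ⟨?_, ?_, ?_⟩ <;> simp [sR]

theorem sR_add (M N : ↥(UTR F)) : sR F (M + N) = sR F M + sR F N := by
  apply Subtype.ext
  show _ = (sR F M).1 + (sR F N).1
  simp only [sR]
  show !![(M.1 + N.1) 1 1, (M.1 + N.1) 0 1; 0, (M.1 + N.1) 0 0] = _
  ext i j
  fin_cases i <;> fin_cases j <;> simp [Matrix.add_apply]

theorem sR_neg (M : ↥(UTR F)) : sR F (-M) = -sR F M := by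
  apply Subtype.ext
  show _ = -(sR F M).1
  simp only [sR]
  show !![(-M.1) 1 1, (-M.1) 0 1; 0, (-M.1) 0 0] = _
  ext i j
  fin_cases i <;> fin_cases j <;> simp [Matrix.neg_apply]

theorem sR_mul (M N : ↥(UTR F)) : sR F (M * N) = sR F N * sR F M := by
  apply Subtype.ext
  show _ = (sR F N).1 * (sR F M).1
  simp only [sR]
  show !![(M * N).1 1 1, (M * N).1 0 1; 0, (M * N).1 0 0] = _
  rw [UTRmul00, UTRmul01, UTRmul11, Matrix.mul_fin_two]
  ext i j
  fin_cases i <;> fin_cases j <;> simp <;> ring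

theorem sR_algebraMap (r : F) :
    sR F ((algebraMap F ↥(UTR F)) r) = (algebraMap F ↥(UTR F)) r := by
  apply Subtype.ext
  simp only [sR]
  have h00 := UTRalg F r 0
  have h11 := UTRalg F r 1
  have h01 := UTRalg01 F r
  have h10 := UTR10 F ((algebraMap F ↥(UTR F)) r)
  ext i j
  fin_cases i <;> fin_cases j <;> simp [h00, h11, h01, h10]

theorem Phi_fStar (f : FA F) : Phi F (fStar F f) = sR F (Phi F f) := by
  induction f using FreeAlgebra.induction with
  | grade0 r =>
    rw [fStar_algebraMap]
    rw [AlgHom.commutes, sR_algebraMap]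
  | grade1 x =>
    cases x with
    | inl i =>
      rw [show FreeAlgebra.ι F (Sum.inl i : ℕ ⊕ ℕ) = yv F i from rfl, fStar_y, Phi_y]
      apply Subtype.ext
      simp only [sR, Ygen]
      ext i' j'
      fin_cases i' <;> fin_cases j' <;> simp
    | inr i =>
      rw [show FreeAlgebra.ι F (Sum.inr i : ℕ ⊕ ℕ) = zv F i from rfl, fStar_z, map_neg, Phi_z]
      apply Subtype.ext
      show (-(Zgen F i)).1 = _
      simp only [sR, Zgen]
      ext i' j'
      fin_cases i' <;> fin_cases j' <;> simp [Matrix.neg_apply]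
  | mul a b ha hb => rw [fStar_mul, map_mul, map_mul, ha, hb, sR_mul]
  | add a b ha hb => rw [fStar_add, map_add, map_add, ha, hb, sR_add]

end StarFacts
section CommHoms

open MvPolynomial

variable (F : Type*) [Field F]

@[simp] theorem d0_apply (M : ↥(UTR F)) : d0 F M = M.1 0 0 := rfl
@[simp] theorem d1_apply (M : ↥(UTR F)) : d1 F M = M.1 1 1 := rfl
@[simp] theorem tau_apply (M : ↥(UTR F)) : tau F M = M.1 0 1 := rfl

theorem FA_hom_ext {S : Type*} [Semiring S] [Algebra F S] {g₁ g₂ : FA F →ₐ[F] S}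
    (hy : ∀ i, g₁ (yv F i) = g₂ (yv F i)) (hz : ∀ i, g₁ (zv F i) = g₂ (zv F i)) :
    g₁ = g₂ := by
  apply FreeAlgebra.hom_ext
  funext v
  cases v with
  | inl i => exact hy i
  | inr i => exact hz i

@[simp] theorem d0_Ygen (i : ℕ) : d0 F (Ygen F i) = X (vA i) := by simp [Ygen]
@[simp] theorem d0_Zgen (i : ℕ) : d0 F (Zgen F i) = X (vB i) := by simp [Zgen]
@[simp] theorem d1_Ygen (i : ℕ) : d1 F (Ygen F i) = X (vA i) := by simp [Ygen]
@[simp] theorem d1_Zgen (i : ℕ) : d1 F (Zgen F i) = -X (vB i) := by simp [Zgen]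
@[simp] theorem tau_Ygen (i : ℕ) : tau F (Ygen F i) = X (vC i) := by simp [Ygen]
@[simp] theorem tau_Zgen (i : ℕ) : tau F (Zgen F i) = 0 := by simp [Zgen]

/-- negate the `B` variables -/
noncomputable def nuB : RR F →ₐ[F] RR F :=
  aeval (Sum.elim (fun i => X (vA i))
    (Sum.elim (fun i => -X (vB i)) (fun i => X (vC i))))

/-- kill the `C` variables -/
noncomputable def rhoC : RR F →ₐ[F] RR F :=
  aeval (Sum.elim (fun i => X (vA i))
    (Sum.elim (fun i => X (vB i)) (fun _ => 0)))

/-- kill the `B` and `C` variables -/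
noncomputable def piBC : RR F →ₐ[F] RR F :=
  aeval (Sum.elim (fun i => X (vA i)) (Sum.elim (fun _ => 0) (fun _ => 0)))

/-- kill the `B` variables and all `C` variables except `c_{i₀}` -/
noncomputable def sC (i₀ : ℕ) : RR F →ₐ[F] RR F :=
  aeval (Sum.elim (fun i => X (vA i))
    (Sum.elim (fun _ => 0) (fun i => if i = i₀ then X (vC i) else 0)))

@[simp] theorem nuB_A (i : ℕ) : nuB F (X (vA i)) = X (vA i) := by simp [nuB, vA]
@[simp] theorem nuB_B (i : ℕ) : nuB F (X (vB i)) = -X (vB i) := by simp [nuB, vB]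
@[simp] theorem nuB_C (i : ℕ) : nuB F (X (vC i)) = X (vC i) := by simp [nuB, vC]
@[simp] theorem rhoC_A (i : ℕ) : rhoC F (X (vA i)) = X (vA i) := by simp [rhoC, vA]
@[simp] theorem rhoC_B (i : ℕ) : rhoC F (X (vB i)) = X (vB i) := by simp [rhoC, vB]
@[simp] theorem rhoC_C (i : ℕ) : rhoC F (X (vC i)) = 0 := by simp [rhoC, vC]
@[simp] theorem piBC_A (i : ℕ) : piBC F (X (vA i)) = X (vA i) := by simp [piBC, vA]
@[simp] theorem piBC_B (i : ℕ) : piBC F (X (vB i)) = 0 := by simp [piBC, vB]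
@[simp] theorem piBC_C (i : ℕ) : piBC F (X (vC i)) = 0 := by simp [piBC, vC]
@[simp] theorem sC_A (i₀ i : ℕ) : sC F i₀ (X (vA i)) = X (vA i) := by simp [sC, vA]
@[simp] theorem sC_B (i₀ i : ℕ) : sC F i₀ (X (vB i)) = 0 := by simp [sC, vB]
theorem sC_C (i₀ i : ℕ) : sC F i₀ (X (vC i)) = if i = i₀ then X (vC i) else 0 := by
  simp [sC, vC]

/-- the commutative "highest weight" evaluation : `y i ↦ α i`, `z i ↦ 0`. -/
noncomputable def qh : FA F →ₐ[F] RR F :=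
  ((piBC F).comp (d0 F)).comp (Phi F)

@[simp] theorem qh_y (i : ℕ) : qh F (yv F i) = X (vA i) := by simp [qh, Ygen]
@[simp] theorem qh_z (i : ℕ) : qh F (zv F i) = 0 := by simp [qh, Zgen]

theorem d1_Phi_eq (f : FA F) : d1 F (Phi F f) = nuB F (d0 F (Phi F f)) := by
  have h : (d1 F).comp (Phi F) = ((nuB F).comp (d0 F)).comp (Phi F) := by
    apply FA_hom_ext <;> intro i <;> simp [Ygen, Zgen]
  exact DFunLike.congr_fun h f

theorem rhoC_d0_Phi (f : FA F) : rhoC F (d0 F (Phi F f)) = d0 F (Phi F f) := by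
  have h : ((rhoC F).comp (d0 F)).comp (Phi F) = (d0 F).comp (Phi F) := by
    apply FA_hom_ext <;> intro i <;> simp [Ygen, Zgen]
  exact DFunLike.congr_fun h f

theorem sC_d0_Phi (i₀ : ℕ) (f : FA F) : sC F i₀ (d0 F (Phi F f)) = qh F f := by
  have h : ((sC F i₀).comp (d0 F)).comp (Phi F) = qh F := by
    apply FA_hom_ext <;> intro i <;> simp [qh, Ygen, Zgen, sC_C]
  exact DFunLike.congr_fun h f

theorem sC_d1_Phi (i₀ : ℕ) (f : FA F) : sC F i₀ (d1 F (Phi F f)) = qh F f := by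
  have h : ((sC F i₀).comp (d1 F)).comp (Phi F) = qh F := by
    apply FA_hom_ext <;> intro i <;> simp [qh, Ygen, Zgen, sC_C]
  exact DFunLike.congr_fun h f

/-- the key derivation identity -/
theorem tau_pderiv (i₀ : ℕ) (f : FA F) :
    sC F i₀ (tau F (Phi F f)) = X (vC i₀) * pderiv (vA i₀) (qh F f) := by
  induction f using FreeAlgebra.induction with
  | grade0 r =>
    rw [show tau F (Phi F ((algebraMap F (FA F)) r)) = 0 by
      rw [AlgHom.commutes]; exact UTRalg01 F r]
    rw [show qh F ((algebraMap F (FA F)) r) = C r by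
      rw [AlgHom.commutes]; exact DFunLike.congr_fun (MvPolynomial.algebraMap_eq F VV) r]
    simp [pderiv_C]
  | grade1 x =>
    cases x with
    | inl i =>
      rw [show FreeAlgebra.ι F (Sum.inl i : ℕ ⊕ ℕ) = yv F i from rfl]
      rw [Phi_y, tau_Ygen, sC_C, qh_y]
      by_cases h : i = i₀
      · subst h; simp [pderiv_X_self]
      · rw [if_neg h, pderiv_X_of_ne, mul_zero]
        exact fun hc => h (Sum.inl.inj hc)
    | inr i =>
      rw [show FreeAlgebra.ι F (Sum.inr i : ℕ ⊕ ℕ) = zv F i from rfl]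
      rw [Phi_z, tau_Zgen, map_zero, qh_z, map_zero, mul_zero]
  | mul a b ha hb =>
    rw [map_mul]
    rw [show tau F (Phi F a * Phi F b)
        = d0 F (Phi F a) * tau F (Phi F b) + tau F (Phi F a) * d1 F (Phi F b) from
      UTRmul01 F (Phi F a) (Phi F b)]
    rw [map_add, map_mul, map_mul, ha, hb, sC_d0_Phi, sC_d1_Phi, map_mul, pderiv_mul]
    ring
  | add a b ha hb =>
    simp only [map_add, ha, hb]
    ring

end CommHoms
section Subst

open MvPolynomial

variable (F : Type*) [Field F]

theorem UT2_10 (M : ↥(UT2 F)) : M.1 1 0 = 0 := M.2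

theorem starUT_eq_self_iff (M : ↥(UT2 F)) :
    starUT F M = M ↔ M.1 1 1 = M.1 0 0 := by
  constructor
  · intro h
    have := congrArg (fun N : ↥(UT2 F) => N.1 0 0) h
    simpa [starUT] using this
  · intro h
    apply Subtype.ext
    show !![M.1 1 1, M.1 0 1; 0, M.1 0 0] = M.1
    ext i j
    fin_cases i <;> fin_cases j <;> simp [h, UT2_10]

theorem eq_zero_of_self_eq_neg {a : F} (h2 : (2:F) ≠ 0) (h : a = -a) : a = 0 := by
  have : (2:F) * a = 0 := by rw [two_mul]; linear_combination h
  rcases mul_eq_zero.mp this with h' | h'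
  · exact absurd h' h2
  · exact h'

theorem starUT_eq_neg_iff (h2 : (2:F) ≠ 0) (M : ↥(UT2 F)) :
    starUT F M = -M ↔ M.1 1 1 = -(M.1 0 0) ∧ M.1 0 1 = 0 := by
  constructor
  · intro h
    have h00 := congrArg (fun N : ↥(UT2 F) => N.1 0 0) h
    have h01 := congrArg (fun N : ↥(UT2 F) => N.1 0 1) h
    have hn : (-M : ↥(UT2 F)).1 = -(M.1) := rfl
    simp [starUT, hn, Matrix.neg_apply] at h00 h01
    exact ⟨h00, eq_zero_of_self_eq_neg F h2 h01⟩
  · intro ⟨h1, h01⟩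
    apply Subtype.ext
    show !![M.1 1 1, M.1 0 1; 0, M.1 0 0] = (-(M.1))
    ext i j
    fin_cases i <;> fin_cases j <;>
      simp [h1, h01, UT2_10, Matrix.neg_apply]

/-- evaluation of the generic model at a point -/
noncomputable def evalUT (v : VV → F) : ↥(UTR F) →ₐ[F] ↥(UT2 F) :=
  AlgHom.codRestrict (((MvPolynomial.aeval v : RR F →ₐ[F] F).mapMatrix).comp (UTR F).val)
    (UT2 F) (fun M => by
      show ((M.1).map (aeval v)) 1 0 = 0
      rw [Matrix.map_apply, UTR10, map_zero])

theorem evalUT_val (v : VV → F) (M : ↥(UTR F)) :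
    (evalUT F v M).1 = (M.1).map (aeval v) := rfl

/-- the substitution attached to a point -/
noncomputable def phiv (v : VV → F) : FA F →ₐ[F] ↥(UT2 F) :=
  (evalUT F v).comp (Phi F)

theorem phiv_entry (v : VV → F) (f : FA F) (i j : Fin 2) :
    (phiv F v f).1 i j = aeval v ((Phi F f).1 i j) := by
  show ((Phi F f).1.map (aeval v)) i j = _
  rw [Matrix.map_apply]

theorem phiv_subst (v : VV → F) : IsSubstWith F (starUT F) (phiv F v) := by
  constructor
  · intro i
    rw [starUT_eq_self_iff]
    rw [phiv_entry, phiv_entry, Phi_y]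
    simp [Ygen]
  · intro i
    apply Subtype.ext
    show !![(phiv F v (zv F i)).1 1 1, (phiv F v (zv F i)).1 0 1; 0,
      (phiv F v (zv F i)).1 0 0] = -((phiv F v (zv F i)).1)
    ext a b
    have e : ∀ a b : Fin 2, (phiv F v (zv F i)).1 a b = aeval v ((Zgen F i).1 a b) := by
      intro a b; rw [phiv_entry, Phi_z]
    fin_cases a <;> fin_cases b <;>
      simp [e, Zgen, Matrix.neg_apply]

/-- the point attached to a substitution -/
noncomputable def vOf (φ : FA F →ₐ[F] ↥(UT2 F)) : VV → F :=
  Sum.elim (fun i => (φ (yv F i)).1 0 0)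
    (Sum.elim (fun i => (φ (zv F i)).1 0 0) (fun i => (φ (yv F i)).1 0 1))

theorem subst_eq (h2 : (2:F) ≠ 0) (φ : FA F →ₐ[F] ↥(UT2 F))
    (hφ : IsSubstWith F (starUT F) φ) :
    φ = (evalUT F (vOf F φ)).comp (Phi F) := by
  apply FA_hom_ext
  · intro i
    have hy := (starUT_eq_self_iff F _).mp (hφ.1 i)
    apply Subtype.ext
    show _ = ((Phi F (yv F i)).1).map (aeval (vOf F φ))
    rw [Phi_y]
    ext a b
    fin_cases a <;> fin_cases b <;>
      simp [Ygen, vOf, vA, vC, hy, UT2_10]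
  · intro i
    have hz := (starUT_eq_neg_iff F h2 _).mp (hφ.2 i)
    apply Subtype.ext
    show _ = ((Phi F (zv F i)).1).map (aeval (vOf F φ))
    rw [Phi_z]
    ext a b
    fin_cases a <;> fin_cases b <;>
      simp [Zgen, vOf, vB, hz.1, hz.2, UT2_10]

theorem aeval_eq_eval (v : VV → F) (q : RR F) : aeval v q = eval v q := by
  rw [MvPolynomial.aeval_def, Algebra.algebraMap_self]
  rfl

theorem poly_zero_of_eval [Infinite F] (q : RR F) (h : ∀ v : VV → F, aeval v q = 0) :
    q = 0 := by
  apply MvPolynomial.funext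
  intro v
  rw [← aeval_eq_eval, h v, map_zero]

theorem mem_IdWith_iff [Infinite F] (h2 : (2:F) ≠ 0) (f : FA F) :
    f ∈ IdWith F (starUT F) ↔ Phi F f = 0 := by
  constructor
  · intro hf
    have h : ∀ v : VV → F, phiv F v f = 0 := fun v => hf (phiv F v) (phiv_subst F v)
    apply Subtype.ext
    show (Phi F f).1 = (0 : Matrix (Fin 2) (Fin 2) (RR F))
    refine Matrix.ext fun i j => ?_
    show (Phi F f).1 i j = 0
    apply poly_zero_of_eval
    intro v
    rw [← phiv_entry, h v]
    rfl
  · intro hf φ hφ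
    rw [subst_eq F h2 φ hφ]
    show evalUT F (vOf F φ) (Phi F f) = 0
    rw [hf, map_zero]

theorem mem_center_UT2_iff (M : ↥(UT2 F)) :
    M ∈ Subalgebra.center F ↥(UT2 F) ↔ M.1 0 1 = 0 ∧ M.1 0 0 = M.1 1 1 := by
  rw [Subalgebra.mem_center_iff]
  constructor
  · intro h
    have hE : (!![0, 1; 0, 0] : Matrix (Fin 2) (Fin 2) F) ∈ UT2 F := by
      rw [mem_UT2]; simp
    have hD : (!![1, 0; 0, 0] : Matrix (Fin 2) (Fin 2) F) ∈ UT2 F := by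
      rw [mem_UT2]; simp
    have h1 := congrArg Subtype.val (h ⟨_, hE⟩)
    have h2 := congrArg Subtype.val (h ⟨_, hD⟩)
    have h1' : !![(0:F),1;0,0] * M.1 = M.1 * !![0,1;0,0] := h1
    have h2' : !![(1:F),0;0,0] * M.1 = M.1 * !![1,0;0,0] := h2
    rw [Matrix.eta_fin_two M.1, UT2_10 F M] at h1' h2'
    rw [Matrix.mul_fin_two, Matrix.mul_fin_two] at h1' h2'
    have e1 := congrFun (congrFun h1' 0) 1
    have e2 := congrFun (congrFun h2' 0) 1
    simp at e1 e2
    exact ⟨e2, e1.symm⟩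
  · intro ⟨h01, hd⟩ b
    apply Subtype.ext
    show b.1 * M.1 = M.1 * b.1
    rw [Matrix.eta_fin_two M.1, Matrix.eta_fin_two b.1, UT2_10 F M, UT2_10 F b, h01, hd,
      Matrix.mul_fin_two, Matrix.mul_fin_two]
    ext i j
    fin_cases i <;> fin_cases j <;> simp <;> ring

theorem mem_CWith_iff [Infinite F] (h2 : (2:F) ≠ 0) (f : FA F) :
    f ∈ CWith F (starUT F) ↔
      (Phi F f).1 0 1 = 0 ∧ (Phi F f).1 0 0 = (Phi F f).1 1 1 := by
  constructor
  · intro hf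
    have h : ∀ v : VV → F, (phiv F v f).1 0 1 = 0 ∧ (phiv F v f).1 0 0 = (phiv F v f).1 1 1 :=
      fun v => (mem_center_UT2_iff F _).mp (hf (phiv F v) (phiv_subst F v))
    constructor
    · apply poly_zero_of_eval
      intro v
      rw [← phiv_entry, (h v).1]
    · have : ∀ v : VV → F, aeval v ((Phi F f).1 0 0 - (Phi F f).1 1 1) = 0 := by
        intro v
        rw [map_sub, ← phiv_entry, ← phiv_entry, (h v).2, sub_self]
      exact sub_eq_zero.mp (poly_zero_of_eval F _ this)
  · intro ⟨h01, hd⟩ φ hφ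
    rw [subst_eq F h2 φ hφ]
    show evalUT F (vOf F φ) (Phi F f) ∈ _
    rw [mem_center_UT2_iff]
    constructor
    · show ((Phi F f).1.map (aeval (vOf F φ))) 0 1 = 0
      rw [Matrix.map_apply, h01, map_zero]
    · show ((Phi F f).1.map (aeval (vOf F φ))) 0 0 = ((Phi F f).1.map (aeval (vOf F φ))) 1 1
      rw [Matrix.map_apply, Matrix.map_apply, hd]

end Subst
section GoodSide

open MvPolynomial

variable (F : Type*) [Field F]

theorem RR_two_ne_zero (h2 : (2:F) ≠ 0) : (2 : RR F) ≠ 0 := by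
  intro h
  have hC : (MvPolynomial.C (2:F) : RR F) = 0 := by rw [map_ofNat]; exact h
  rw [MvPolynomial.C_eq_zero] at hC
  exact h2 hC

theorem poly_self_neg (h2 : (2:F) ≠ 0) {a : RR F} (h : a = -a) : a = 0 := by
  have h' : (2 : RR F) * a = 0 := by rw [two_mul]; linear_combination h
  rcases mul_eq_zero.mp h' with hh | hh
  · exact absurd hh (RR_two_ne_zero F h2)
  · exact hh

theorem skew_entries (h2 : (2:F) ≠ 0) {u : FA F} (hu : IsSkew F u) :
    (Phi F u).1 0 1 = 0 ∧ (Phi F u).1 1 1 = -((Phi F u).1 0 0) := by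
  have e : sR F (Phi F u) = -(Phi F u) := by
    rw [← Phi_fStar, hu, map_neg]
  have e01 : (sR F (Phi F u)).1 0 1 = (-(Phi F u) : ↥(UTR F)).1 0 1 :=
    congrArg (fun N : ↥(UTR F) => N.1 0 1) e
  have e00 : (sR F (Phi F u)).1 0 0 = (-(Phi F u) : ↥(UTR F)).1 0 0 :=
    congrArg (fun N : ↥(UTR F) => N.1 0 0) e
  rw [show (-(Phi F u) : ↥(UTR F)).1 0 1 = -((Phi F u).1 0 1) from rfl] at e01
  rw [show (-(Phi F u) : ↥(UTR F)).1 0 0 = -((Phi F u).1 0 0) from rfl] at e00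
  rw [(sR_entries F _).2.1] at e01
  rw [(sR_entries F _).1] at e00
  exact ⟨poly_self_neg F h2 e01, e00⟩

theorem sym_entries {g : FA F} (hg : IsSym F g) :
    (Phi F g).1 1 1 = (Phi F g).1 0 0 := by
  have e : sR F (Phi F g) = Phi F g := by rw [← Phi_fStar, hg]
  have e00 : (sR F (Phi F g)).1 0 0 = (Phi F g).1 0 0 :=
    congrArg (fun N : ↥(UTR F) => N.1 0 0) e
  rw [(sR_entries F _).1] at e00
  exact e00

theorem pow_entries (M : ↥(UTR F)) (hM : M.1 1 1 = M.1 0 0) (n : ℕ) :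
    (M^(n+1)).1 0 0 = (M.1 0 0)^(n+1) ∧ (M^(n+1)).1 1 1 = (M.1 0 0)^(n+1) ∧
      (M^(n+1)).1 0 1 = ((n+1 : ℕ) : RR F) * ((M.1 0 0)^n * M.1 0 1) := by
  induction n with
  | zero =>
    refine ⟨by rw [pow_one, pow_one], by rw [pow_one, pow_one, hM], ?_⟩
    rw [pow_one, pow_zero]
    push_cast
    ring
  | succ n ih =>
    have hmul : M^(n+2) = M^(n+1) * M := by rw [pow_succ]
    refine ⟨?_, ?_, ?_⟩
    · rw [hmul, UTRmul00, ih.1, ← pow_succ]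
    · rw [hmul, UTRmul11, ih.2.1, hM, ← pow_succ]
    · rw [hmul, UTRmul01, ih.1, ih.2.2, hM]
      push_cast
      ring

/-- linear map f ↦ 0-1 entry of Φ f -/
noncomputable def tL : FA F →ₗ[F] RR F :=
  (tau F).comp (Phi F).toLinearMap

/-- linear map f ↦ (0-0 entry) - (1-1 entry) of Φ f -/
noncomputable def dL : FA F →ₗ[F] RR F :=
  ((d0 F).toLinearMap - (d1 F).toLinearMap).comp (Phi F).toLinearMap

@[simp] theorem tL_apply (f : FA F) : tL F f = (Phi F f).1 0 1 := rfl
@[simp] theorem dL_apply (f : FA F) : dL F f = (Phi F f).1 0 0 - (Phi F f).1 1 1 := rfl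

/-- the span of p-th powers of symmetric polynomials -/
def Pspan (p : ℕ) : Submodule F (FA F) :=
  Submodule.span F {f : FA F | ∃ g, IsSym F g ∧ f = g ^ p}

theorem TSz_le_good (h2 : (2:F) ≠ 0) :
    TSz F ≤ LinearMap.ker (tL F) ⊓ LinearMap.ker (dL F) := by
  rw [TSz, Submodule.span_le]
  rintro x ⟨u, v, hu, hv, rfl⟩
  obtain ⟨hu1, hu2⟩ := skew_entries F h2 hu
  obtain ⟨hv1, hv2⟩ := skew_entries F h2 hv
  rw [SetLike.mem_coe, Submodule.mem_inf, LinearMap.mem_ker, LinearMap.mem_ker,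
    tL_apply, dL_apply, map_mul]
  constructor
  · rw [UTRmul01, hu1, hv1]
    ring
  · rw [UTRmul00, UTRmul11, hu2, hv2]
    ring

theorem Pspan_le_good (p : ℕ) [CharP F p] (hp : 2 < p) :
    Pspan F p ≤ LinearMap.ker (tL F) ⊓ LinearMap.ker (dL F) := by
  rw [Pspan, Submodule.span_le]
  rintro x ⟨g, hg, rfl⟩
  obtain ⟨n, hn⟩ : ∃ n, p = n + 1 := ⟨p - 1, by omega⟩
  have hsym := sym_entries F hg
  have hpe := pow_entries F (Phi F g) hsym n
  have hcast : ((p : ℕ) : RR F) = 0 := by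
    rw [show ((p:ℕ) : RR F) = MvPolynomial.C ((p:ℕ) : F) from (map_natCast _ p).symm,
      CharP.cast_eq_zero F p, map_zero]
  rw [SetLike.mem_coe, Submodule.mem_inf, LinearMap.mem_ker, LinearMap.mem_ker,
    tL_apply, dL_apply, map_pow, hn]
  refine ⟨?_, ?_⟩
  · rw [hpe.2.2, ← hn, hcast, zero_mul]
  · rw [hpe.1, hpe.2.1, sub_self]

end GoodSide
section Coeffs

open MvPolynomial

variable (F : Type*) [Field F]

theorem coeff_aeval_scale (ε : VV → F) (h : RR F) (μ : VV →₀ ℕ) :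
    coeff μ (aeval (fun v => ε v • (X v : RR F)) h)
      = (μ.prod fun v k => ε v ^ k) * coeff μ h := by
  conv_lhs => rw [← support_sum_monomial_coeff h]
  rw [map_sum, coeff_sum]
  have hterm : ∀ ν : VV →₀ ℕ,
      coeff μ (aeval (fun v => ε v • (X v : RR F)) (monomial ν (coeff ν h)))
        = if ν = μ then (ν.prod fun v k => ε v ^ k) * coeff ν h else 0 := by
    intro ν
    rw [aeval_monomial]
    have hpow : ∀ v k, (ε v • (X v : RR F)) ^ k = MvPolynomial.C (ε v ^ k) * X v ^ k := by
      intro v k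
      rw [smul_pow, smul_eq_C_mul]
    have : (ν.prod fun v k => (ε v • (X v : RR F)) ^ k)
        = MvPolynomial.C (ν.prod fun v k => ε v ^ k) * (ν.prod fun v k => (X v : RR F) ^ k) :=
      calc (ν.prod fun v k => (ε v • (X v : RR F)) ^ k)
          = ν.prod fun v k => MvPolynomial.C (ε v ^ k) * (X v : RR F) ^ k :=
            Finsupp.prod_congr fun v _ => hpow v (ν v)
        _ = (ν.prod fun v k => (MvPolynomial.C (ε v ^ k) : RR F))
              * (ν.prod fun v k => (X v : RR F) ^ k) := Finsupp.prod_mul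
        _ = _ := by rw [← map_finsuppProd (MvPolynomial.C : F →+* RR F)]
    rw [this, show (ν.prod fun v k => (X v : RR F) ^ k) = monomial ν 1 by
      rw [monomial_eq, map_one, one_mul]]
    rw [show (algebraMap F (RR F)) (coeff ν h) = MvPolynomial.C (coeff ν h) from rfl]
    rw [← mul_assoc, ← map_mul, coeff_C_mul, coeff_monomial]
    by_cases hh : ν = μ
    · rw [if_pos hh, if_pos hh, mul_one, mul_comm]
    · rw [if_neg hh, if_neg hh, mul_zero]
  rw [Finset.sum_congr rfl fun ν _ => hterm ν, Finset.sum_ite_eq' h.support μ]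
  by_cases hμ : μ ∈ h.support
  · rw [if_pos hμ]
  · rw [if_neg hμ, MvPolynomial.notMem_support_iff.mp hμ, mul_zero]

/-- number of B-variables in a monomial -/
def nB (μ : VV →₀ ℕ) : ℕ :=
  μ.sum fun v k => (Sum.elim (fun _ => 0) (Sum.elim (fun _ => 1) (fun _ => 0)) v) * k

/-- number of C-variables in a monomial -/
def nC (μ : VV →₀ ℕ) : ℕ :=
  μ.sum fun v k => (Sum.elim (fun _ => 0) (Sum.elim (fun _ => 0) (fun _ => 1)) v) * k

theorem prod_sign (w : VV → ℕ) (μ : VV →₀ ℕ) :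
    (μ.prod fun v k => ((-1 : F) ^ w v) ^ k) = (-1 : F) ^ (μ.sum fun v k => w v * k) := by
  rw [Finsupp.prod, Finsupp.sum]
  rw [← Finset.prod_pow_eq_pow_sum]
  exact Finset.prod_congr rfl fun v _ => by rw [← pow_mul]

theorem wprod_one (ε : VV → F) (w : VV → ℕ)
    (hw : ∀ v, (w v = 0 → ε v = 1) ∧ (w v ≠ 0 → ε v = 0)) (μ : VV →₀ ℕ)
    (hz : (μ.sum fun v k => w v * k) = 0) :
    (μ.prod fun v k => ε v ^ k) = 1 := by
  rw [Finsupp.prod]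
  apply Finset.prod_eq_one
  intro v hv
  have hμv : μ v ≠ 0 := Finsupp.mem_support_iff.mp hv
  have : w v * μ v = 0 := by
    have hz' : (∑ v ∈ μ.support, w v * μ v) = 0 := hz
    exact (Finset.sum_eq_zero_iff.mp hz') v hv
  have hwv : w v = 0 := by
    rcases Nat.mul_eq_zero.mp this with h | h
    · exact h
    · exact absurd h hμv
  rw [(hw v).1 hwv, one_pow]

theorem wprod_zero (ε : VV → F) (w : VV → ℕ)
    (hw : ∀ v, (w v = 0 → ε v = 1) ∧ (w v ≠ 0 → ε v = 0)) (μ : VV →₀ ℕ)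
    (hz : (μ.sum fun v k => w v * k) ≠ 0) :
    (μ.prod fun v k => ε v ^ k) = 0 := by
  rw [Finsupp.prod]
  have : ∃ v ∈ μ.support, w v * μ v ≠ 0 := by
    by_contra hcon
    push_neg at hcon
    exact hz (by exact Finset.sum_eq_zero hcon)
  obtain ⟨v, hv, hwv⟩ := this
  apply Finset.prod_eq_zero hv
  have : w v ≠ 0 := fun h => hwv (by rw [h, zero_mul])
  rw [(hw v).2 this, zero_pow (fun h => hwv (by rw [h, mul_zero]))]

/-- weight functions -/
def wB : VV → ℕ := Sum.elim (fun _ => 0) (Sum.elim (fun _ => 1) (fun _ => 0))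
def wC : VV → ℕ := Sum.elim (fun _ => 0) (Sum.elim (fun _ => 0) (fun _ => 1))

theorem nuB_eq_scale : nuB F = aeval (fun v => ((-1 : F) ^ wB v) • (X v : RR F)) := by
  apply MvPolynomial.algHom_ext
  intro v
  rw [MvPolynomial.aeval_X]
  cases v with
  | inl i => show nuB F (X (vA i)) = _; rw [nuB_A]; simp [wB, vA, vB, vC]
  | inr w =>
    cases w with
    | inl i => show nuB F (X (vB i)) = _; rw [nuB_B]; simp [wB, vA, vB, vC]
    | inr i => show nuB F (X (vC i)) = _; rw [nuB_C]; simp [wB, wC, vA, vB, vC]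

theorem rhoC_eq_scale :
    rhoC F = aeval (fun v => ((fun v => if wC v = 0 then (1:F) else 0) v) • (X v : RR F)) := by
  apply MvPolynomial.algHom_ext
  intro v
  rw [MvPolynomial.aeval_X]
  cases v with
  | inl i => show rhoC F (X (vA i)) = _; rw [rhoC_A]; simp [wC, vA, vB, vC]
  | inr w =>
    cases w with
    | inl i => show rhoC F (X (vB i)) = _; rw [rhoC_B]; simp [wC, vA, vB, vC]
    | inr i => show rhoC F (X (vC i)) = _; rw [rhoC_C]; simp [wC, vA, vB, vC]

theorem piBC_eq_scale :
    piBC F = aeval (fun v => ((fun v => if wB v + wC v = 0 then (1:F) else 0) v) • (X v : RR F)) := by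
  apply MvPolynomial.algHom_ext
  intro v
  rw [MvPolynomial.aeval_X]
  cases v with
  | inl i => show piBC F (X (vA i)) = _; rw [piBC_A]; simp [wB, wC, vA, vB, vC]
  | inr w =>
    cases w with
    | inl i => show piBC F (X (vB i)) = _; rw [piBC_B]; simp [wB, wC, vA, vB, vC]
    | inr i => show piBC F (X (vC i)) = _; rw [piBC_C]; simp [wB, wC, vA, vB, vC]

theorem coeff_nuB (h : RR F) (μ : VV →₀ ℕ) :
    coeff μ (nuB F h) = (-1 : F) ^ (nB μ) * coeff μ h := by
  rw [nuB_eq_scale, coeff_aeval_scale, prod_sign]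
  rfl

theorem coeff_rhoC_zero (h : RR F) (μ : VV →₀ ℕ) (hC : nC μ ≠ 0) :
    coeff μ (rhoC F h) = 0 := by
  rw [rhoC_eq_scale, coeff_aeval_scale,
    wprod_zero F _ wC (fun v => ⟨fun hv => if_pos hv, fun hv => if_neg hv⟩) μ hC,
    zero_mul]

theorem coeff_piBC_zero (h : RR F) (μ : VV →₀ ℕ) (hBC : nB μ + nC μ ≠ 0) :
    coeff μ (piBC F h) = 0 := by
  have : (μ.sum fun v k => (wB v + wC v) * k) ≠ 0 := by
    have hsplit : (μ.sum fun v k => (wB v + wC v) * k)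
        = (μ.sum fun v k => wB v * k) + (μ.sum fun v k => wC v * k) := by
      simp only [Finsupp.sum, add_mul]
      exact Finset.sum_add_distrib
    rw [hsplit]
    exact hBC
  rw [piBC_eq_scale, coeff_aeval_scale,
    wprod_zero F _ (fun v => wB v + wC v)
      (fun v => ⟨fun hv => if_pos hv, fun hv => if_neg hv⟩) μ this,
    zero_mul]

theorem coeff_piBC_eq (h : RR F) (μ : VV →₀ ℕ) (hBC : nB μ + nC μ = 0) :
    coeff μ (piBC F h) = coeff μ h := by
  have : (μ.sum fun v k => (wB v + wC v) * k) = 0 := by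
    have hsplit : (μ.sum fun v k => (wB v + wC v) * k)
        = (μ.sum fun v k => wB v * k) + (μ.sum fun v k => wC v * k) := by
      simp only [Finsupp.sum, add_mul]
      exact Finset.sum_add_distrib
    rw [hsplit]
    exact hBC
  rw [piBC_eq_scale, coeff_aeval_scale,
    wprod_one F _ (fun v => wB v + wC v)
      (fun v => ⟨fun hv => if_pos hv, fun hv => if_neg hv⟩) μ this,
    one_mul]

theorem coeff_pderiv_rel (i : VV) (h : RR F) (μ : VV →₀ ℕ) (hi : μ i ≠ 0) :
    coeff (μ - Finsupp.single i 1) (pderiv i h) = coeff μ h * (μ i : F) := by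
  conv_lhs => rw [← support_sum_monomial_coeff h]
  rw [map_sum, coeff_sum]
  have hterm : ∀ ν : VV →₀ ℕ, ν ∈ h.support →
      coeff (μ - Finsupp.single i 1) (pderiv i (monomial ν (coeff ν h)))
        = if ν = μ then coeff ν h * (ν i : F) else 0 := by
    intro ν _
    rw [pderiv_monomial, coeff_monomial]
    by_cases hh : ν = μ
    · rw [if_pos (by rw [hh]), if_pos hh]
    · rw [if_neg hh]
      by_cases hsub : ν - Finsupp.single i 1 = μ - Finsupp.single i 1
      · rw [if_pos hsub]
        have hν : ν i = 0 := by
          by_contra hνi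
          apply hh
          ext j
          by_cases hj : j = i
          · subst hj
            have := DFunLike.congr_fun hsub j
            simp only [Finsupp.tsub_apply, Finsupp.single_eq_same] at this
            omega
          · have := DFunLike.congr_fun hsub j
            simp only [Finsupp.tsub_apply, Finsupp.single_eq_of_ne' (Ne.symm hj)] at this
            omega
        rw [hν]
        simp
      · rw [if_neg hsub]
  rw [Finset.sum_congr rfl hterm, Finset.sum_ite_eq' h.support μ]
  by_cases hμ : μ ∈ h.support
  · rw [if_pos hμ]
  · rw [if_neg hμ, MvPolynomial.notMem_support_iff.mp hμ, zero_mul]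

end Coeffs
section Realize

open MvPolynomial

variable (F : Type*) [Field F]

theorem half_sum {M : Type*} [AddCommMonoid M] [Module F M] (h2 : (2:F) ≠ 0) (x : M) :
    (2:F)⁻¹ • (x + x) = x := by
  rw [← two_smul F x, smul_smul, inv_mul_cancel₀ h2, one_smul]

/-- iterated skew odd word from a list of B-indices -/
noncomputable def skw : List ℕ → FA F
  | [] => 0
  | [j] => zv F j
  | j :: k :: t => ((2:F)⁻¹) • (zv F j * skw t * zv F k + zv F k * skw t * zv F j)

/-- symmetrized multiplication by y-variables -/
noncomputable def sky : List ℕ → FA F → FA F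
  | [], u => u
  | i :: t, u => ((2:F)⁻¹) • (yv F i * sky t u + sky t u * yv F i)

/-- word in y-variables -/
noncomputable def yw : List ℕ → FA F
  | [] => 1
  | i :: t => yv F i * yw t

theorem skw_spec (h2 : (2:F) ≠ 0) :
    ∀ n (L : List ℕ), L.length = n → L.length % 2 = 1 →
      IsSkew F (skw F L) ∧
        d0 F (Phi F (skw F L)) = (L.map fun j => (X (vB j) : RR F)).prod := by
  intro n
  induction n using Nat.strong_induction_on with
  | _ n ih =>
    intro L hlen hodd
    match L with
    | [] => simp at hodd
    | [j] =>
      refine ⟨fStar_z F j, ?_⟩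
      show d0 F (Phi F (zv F j)) = _
      simp [Zgen]
    | j :: k :: t =>
      have htlen : t.length = n - 2 := by
        simp only [List.length_cons] at hlen; omega
      have hlt : n - 2 < n := by
        simp only [List.length_cons] at hlen; omega
      have htodd : t.length % 2 = 1 := by
        simp only [List.length_cons] at hodd ⊢; omega
      obtain ⟨hskew, hd0⟩ := ih (n - 2) hlt t htlen htodd
      have hsk' : fStar F (skw F t) = -(skw F t) := hskew
      have hunfold : skw F (j :: k :: t)
          = ((2:F)⁻¹) • (zv F j * skw F t * zv F k + zv F k * skw F t * zv F j) := rfl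
      constructor
      · show fStar F _ = _
        rw [hunfold, fStar_smul, fStar_add, fStar_mul, fStar_mul, fStar_mul, fStar_mul,
          fStar_z, fStar_z, hsk']
        simp only [neg_mul_neg, neg_mul, mul_neg, neg_neg]
        rw [← neg_add, smul_neg]
        congr 1
        simp only [mul_assoc]
        rw [add_comm]
      · rw [hunfold]
        simp only [map_smul, map_add, map_mul, Phi_z, d0_Zgen, hd0]
        rw [List.map_cons, List.map_cons, List.prod_cons, List.prod_cons]
        rw [show (X (vB j) : RR F) * ((t.map fun j => (X (vB j) : RR F)).prod) * X (vB k)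
              + X (vB k) * ((t.map fun j => (X (vB j) : RR F)).prod) * X (vB j)
            = (X (vB j) * (X (vB k) * (t.map fun j => (X (vB j) : RR F)).prod))
              + (X (vB j) * (X (vB k) * (t.map fun j => (X (vB j) : RR F)).prod)) by ring]
        exact half_sum F h2 _

theorem sky_spec (h2 : (2:F) ≠ 0) (u : FA F) (hu : IsSkew F u) :
    ∀ K : List ℕ, IsSkew F (sky F K u) ∧
      d0 F (Phi F (sky F K u)) = (K.map fun i => (X (vA i) : RR F)).prod * d0 F (Phi F u) := by
  intro K
  induction K with
  | nil =>
    refine ⟨hu, ?_⟩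
    show d0 F (Phi F u) = _
    rw [List.map_nil, List.prod_nil, one_mul]
  | cons i t ih =>
    obtain ⟨hskew, hd0⟩ := ih
    have hsk' : fStar F (sky F t u) = -(sky F t u) := hskew
    have hunfold : sky F (i :: t) u
        = ((2:F)⁻¹) • (yv F i * sky F t u + sky F t u * yv F i) := rfl
    constructor
    · show fStar F _ = _
      rw [hunfold, fStar_smul, fStar_add, fStar_mul, fStar_mul, fStar_y, hsk']
      simp only [neg_mul, mul_neg]
      rw [← neg_add, smul_neg]
      congr 1
      rw [add_comm]
    · rw [hunfold]
      simp only [map_smul, map_add, map_mul, Phi_y, d0_Ygen, hd0]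
      rw [List.map_cons, List.prod_cons]
      rw [show (X (vA i) : RR F) * ((t.map fun i => (X (vA i) : RR F)).prod * d0 F (Phi F u))
            + (t.map fun i => (X (vA i) : RR F)).prod * d0 F (Phi F u) * X (vA i)
          = (X (vA i) * ((t.map fun i => (X (vA i) : RR F)).prod * d0 F (Phi F u)))
            + (X (vA i) * ((t.map fun i => (X (vA i) : RR F)).prod * d0 F (Phi F u))) by ring]
      rw [half_sum F h2 _, mul_assoc]

theorem yw_spec (K : List ℕ) :
    d0 F (Phi F (yw F K)) = (K.map fun i => (X (vA i) : RR F)).prod ∧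
      d1 F (Phi F (yw F K)) = (K.map fun i => (X (vA i) : RR F)).prod := by
  induction K with
  | nil =>
    constructor
    · rw [show yw F [] = (1 : FA F) from rfl, map_one, map_one, List.map_nil, List.prod_nil]
    · rw [show yw F [] = (1 : FA F) from rfl, map_one, map_one, List.map_nil, List.prod_nil]
  | cons i t ih =>
    constructor
    · rw [show yw F (i :: t) = yv F i * yw F t from rfl, map_mul, map_mul, Phi_y, d0_Ygen,
        ih.1, List.map_cons, List.prod_cons]
    · rw [show yw F (i :: t) = yv F i * yw F t from rfl, map_mul, map_mul, Phi_y, d1_Ygen,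
        ih.2, List.map_cons, List.prod_cons]

theorem nw_eq_zero_iff (w : VV → ℕ) (μ : VV →₀ ℕ) :
    (μ.sum fun v k => w v * k) = 0 ↔ ∀ v, w v * μ v = 0 := by
  constructor
  · intro h v
    by_cases hv : v ∈ μ.support
    · have h' : (∑ v ∈ μ.support, w v * μ v) = 0 := h
      exact Finset.sum_eq_zero_iff.mp h' v hv
    · rw [Finsupp.notMem_support_iff.mp hv, mul_zero]
  · intro h
    exact Finset.sum_eq_zero fun v _ => h v

theorem nC_zero_iff (μ : VV →₀ ℕ) : nC μ = 0 ↔ ∀ v, wC v * μ v = 0 :=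
  nw_eq_zero_iff wC μ

theorem nB_zero_iff (μ : VV →₀ ℕ) : nB μ = 0 ↔ ∀ v, wB v * μ v = 0 :=
  nw_eq_zero_iff wB μ

theorem nB_add (μ ν : VV →₀ ℕ) : nB (μ + ν) = nB μ + nB ν :=
  Finsupp.sum_add_index' (fun v => mul_zero _) (fun v k₁ k₂ => by ring)

theorem nC_add (μ ν : VV →₀ ℕ) : nC (μ + ν) = nC μ + nC ν :=
  Finsupp.sum_add_index' (fun v => mul_zero _) (fun v k₁ k₂ => by ring)

theorem nB_single (v : VV) (b : ℕ) : nB (Finsupp.single v b) = wB v * b :=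
  Finsupp.sum_single_index (mul_zero _)

theorem nC_single (v : VV) (b : ℕ) : nC (Finsupp.single v b) = wC v * b :=
  Finsupp.sum_single_index (mul_zero _)

/-- every B/C-free-in-C monomial factors into lists -/
theorem glue (μ : VV →₀ ℕ) (hC : nC μ = 0) :
    ∃ K L : List ℕ, L.length = nB μ ∧
      (monomial μ (1:F) : RR F)
        = (K.map fun i => (X (vA i) : RR F)).prod * (L.map fun j => (X (vB j) : RR F)).prod := by
  induction μ using Finsupp.induction with
  | zero =>
    refine ⟨[], [], ?_, ?_⟩
    · rw [show nB 0 = 0 from rfl]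
      rfl
    · simp [monomial_zero']
  | single_add v b f hv hb ihf =>
    have hCf : nC f = 0 ∧ wC v * b = 0 := by
      rw [nC_add, nC_single] at hC
      omega
    obtain ⟨K, L, hlen, hprod⟩ := ihf hCf.1
    have hsplit : (monomial (Finsupp.single v b + f) (1:F) : RR F)
        = (X v : RR F) ^ b * monomial f 1 := by
      rw [X_pow_eq_monomial, monomial_mul, one_mul]
    cases v with
    | inl i =>
      refine ⟨List.replicate b i ++ K, L, ?_, ?_⟩
      · rw [nB_add, nB_single, hlen]
        simp [wB]
      · rw [hsplit, hprod, List.map_append, List.prod_append, List.map_replicate,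
          List.prod_replicate]
        simp only [vA, vB, vC]
        ring
    | inr w =>
      cases w with
      | inl j =>
        refine ⟨K, List.replicate b j ++ L, ?_, ?_⟩
        · rw [nB_add, nB_single, ← hlen]
          simp only [List.length_append, List.length_replicate, wB, Sum.elim_inr, Sum.elim_inl]
          omega
        · rw [hsplit, hprod, List.map_append, List.prod_append, List.map_replicate,
            List.prod_replicate]
          simp only [vA, vB, vC]
          ring
      | inr j =>
        exfalso
        have : wC (Sum.inr (Sum.inr j)) * b = 0 := hCf.2
        simp [wC] at this
        exact hb this

/-- realization of admissible `B`-positive monomials in the image of `TSz` -/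
theorem real_T (h2 : (2:F) ≠ 0) (μ : VV →₀ ℕ) (c : F) (hC : nC μ = 0)
    (hB : nB μ ≠ 0) (hBeven : nB μ % 2 = 0) :
    ∃ t ∈ TSz F, d0 F (Phi F t) = (monomial μ c : RR F) := by
  obtain ⟨K, L, hlen, hprod⟩ := glue F μ hC
  match L, hlen, hprod with
  | [], hlen, hprod => exact absurd hlen.symm hB
  | j :: L', hlen, hprod =>
    have hodd : L'.length % 2 = 1 := by
      simp only [List.length_cons] at hlen
      omega
    obtain ⟨hsk1, hd1⟩ := skw_spec F h2 L'.length L' rfl hodd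
    obtain ⟨hsk2, hd2⟩ := sky_spec F h2 (skw F L') hsk1 K
    refine ⟨c • (zv F j * sky F K (skw F L')), ?_, ?_⟩
    · exact Submodule.smul_mem _ c (Submodule.subset_span
        ⟨zv F j, sky F K (skw F L'), fStar_z F j, hsk2, rfl⟩)
    · rw [map_smul, map_smul, map_mul, map_mul, Phi_z, d0_Zgen, hd2, hd1]
      rw [show (monomial μ c : RR F) = c • (monomial μ 1 : RR F) by
        rw [smul_monomial, smul_eq_mul, mul_one]]
      rw [hprod]
      rw [List.map_cons, List.prod_cons]
      congr 1
      ring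

/-- realization of p-th-power monomials in the image of `Pspan` -/
theorem real_P (h2 : (2:F) ≠ 0) (p : ℕ) (hp0 : p ≠ 0) (μ : VV →₀ ℕ) (c : F)
    (hC : nC μ = 0) (hB : nB μ = 0) (hdiv : ∀ v, p ∣ μ v) :
    ∃ s ∈ Pspan F p, d0 F (Phi F s) = (monomial μ c : RR F) := by
  set κ : VV →₀ ℕ := Finsupp.mapRange (· / p) (Nat.zero_div p) μ with hκdef
  have hκ : ∀ v, κ v = μ v / p := fun v => rfl
  have hμκ : p • κ = μ := by
    ext v
    rw [Finsupp.smul_apply, hκ v, smul_eq_mul, Nat.mul_div_cancel' (hdiv v)]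
  have hκC : nC κ = 0 := by
    rw [nC_zero_iff] at hC ⊢
    intro v
    rcases Nat.mul_eq_zero.mp (hC v) with h | h
    · rw [h, zero_mul]
    · rw [hκ v, h, Nat.zero_div, mul_zero]
  have hκB : nB κ = 0 := by
    rw [nB_zero_iff] at hB ⊢
    intro v
    rcases Nat.mul_eq_zero.mp (hB v) with h | h
    · rw [h, zero_mul]
    · rw [hκ v, h, Nat.zero_div, mul_zero]
  obtain ⟨K, L, hlen, hprod⟩ := glue F κ hκC
  have hLnil : L = [] := List.length_eq_zero_iff.mp (by rw [hlen, hκB])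
  rw [hLnil, List.map_nil, List.prod_nil, mul_one] at hprod
  set g : FA F := (2:F)⁻¹ • (yw F K + fStar F (yw F K)) with hgdef
  have hgsym : IsSym F g := by
    show fStar F g = g
    rw [hgdef, fStar_smul, fStar_add, fStar_fStar]
    rw [add_comm]
  have hgd0 : d0 F (Phi F g) = (monomial κ 1 : RR F) := by
    have h1 : d0 F (Phi F (fStar F (yw F K))) = d1 F (Phi F (yw F K)) := by
      rw [Phi_fStar]
      exact (sR_entries F _).1
    rw [hgdef, map_smul, map_smul, map_add, map_add, h1, (yw_spec F K).1, (yw_spec F K).2,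
      hprod, half_sum F h2]
  refine ⟨c • g ^ p, ?_, ?_⟩
  · exact Submodule.smul_mem _ c (Submodule.subset_span ⟨g, hgsym, rfl⟩)
  · rw [map_smul, map_smul, map_pow, map_pow, hgd0, monomial_pow, hμκ, one_pow,
      smul_monomial, smul_eq_mul, mul_one]

end Realize
section Main

open MvPolynomial

variable (F : Type*) [Field F]

theorem hard_direction [Infinite F] (p : ℕ) [CharP F p] (hp : 2 < p) (h2 : (2:F) ≠ 0)
    (f : FA F) (hf : f ∈ CWith F (starUT F)) :
    f ∈ (IdWith F (starUT F) ⊔ TSz F) ⊔ Pspan F p := by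
  obtain ⟨h01, hd⟩ := (mem_CWith_iff F h2 f).mp hf
  have hrho : rhoC F (d0 F (Phi F f)) = d0 F (Phi F f) := rhoC_d0_Phi F f
  have hnu : nuB F (d0 F (Phi F f)) = d0 F (Phi F f) := by
    rw [← d1_Phi_eq F f]
    exact hd.symm
  have hder : ∀ i, pderiv (vA i) (qh F f) = 0 := by
    intro i
    have hT := tau_pderiv F i f
    rw [show tau F (Phi F f) = 0 from h01, map_zero] at hT
    rcases mul_eq_zero.mp hT.symm with hX | hD
    · exact absurd hX (MvPolynomial.X_ne_zero _)
    · exact hD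
  have hmem : d0 F (Phi F f) ∈ Submodule.map
      ((d0 F).toLinearMap.comp (Phi F).toLinearMap) (TSz F ⊔ Pspan F p) := by
    rw [← support_sum_monomial_coeff (d0 F (Phi F f))]
    apply Submodule.sum_mem
    intro μ hμ
    have hcμ : coeff μ (d0 F (Phi F f)) ≠ 0 := MvPolynomial.mem_support_iff.mp hμ
    have hCμ : nC μ = 0 := by
      by_contra hc
      exact hcμ (by rw [← hrho]; exact coeff_rhoC_zero F _ μ hc)
    have hBev : nB μ % 2 = 0 := by
      by_contra hodd'
      have hodd : nB μ % 2 = 1 := (Nat.mod_two_eq_zero_or_one (nB μ)).resolve_left hodd'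
      have hcc := coeff_nuB F (d0 F (Phi F f)) μ
      rw [hnu] at hcc
      have hneg : (-1:F)^(nB μ) = -1 := Odd.neg_one_pow ⟨nB μ / 2, by omega⟩
      rw [hneg, neg_one_mul] at hcc
      exact hcμ (eq_zero_of_self_eq_neg F h2 hcc)
    by_cases hB0 : nB μ = 0
    · have hdiv : ∀ v, p ∣ μ v := by
        intro v
        match v with
        | Sum.inl i =>
          by_cases hzero : μ (vA i) = 0
          · rw [show (Sum.inl i : VV) = vA i from rfl, hzero]
            exact dvd_zero p
          · have hq : coeff μ (qh F f) = coeff μ (d0 F (Phi F f)) :=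
              coeff_piBC_eq F _ μ (by rw [hB0, hCμ])
            have hpd := coeff_pderiv_rel F (vA i) (qh F f) μ hzero
            rw [hder i, MvPolynomial.coeff_zero] at hpd
            rcases mul_eq_zero.mp hpd.symm with hca | hcb
            · rw [hq] at hca
              exact absurd hca hcμ
            · exact (CharP.cast_eq_zero_iff F p _).mp hcb
        | Sum.inr (Sum.inl j) =>
          have hz : μ (vB j) = 0 := by
            have := (nB_zero_iff μ).mp hB0 (vB j)
            simpa [wB, vB] using this
          rw [show (Sum.inr (Sum.inl j) : VV) = vB j from rfl, hz]
          exact dvd_zero p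
        | Sum.inr (Sum.inr j) =>
          have hz : μ (vC j) = 0 := by
            have := (nC_zero_iff μ).mp hCμ (vC j)
            simpa [wC, vC] using this
          rw [show (Sum.inr (Sum.inr j) : VV) = vC j from rfl, hz]
          exact dvd_zero p
      obtain ⟨s, hsP, hsd⟩ := real_P F h2 p (by omega) μ (coeff μ (d0 F (Phi F f))) hCμ hB0 hdiv
      exact Submodule.mem_map.mpr ⟨s, Submodule.mem_sup_right hsP, hsd⟩
    · obtain ⟨t, htT, htd⟩ := real_T F h2 μ (coeff μ (d0 F (Phi F f))) hCμ hB0 hBev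
      exact Submodule.mem_map.mpr ⟨t, Submodule.mem_sup_left htT, htd⟩
  obtain ⟨g, hgmem, hgd⟩ := hmem
  have hgd' : d0 F (Phi F g) = d0 F (Phi F f) := hgd
  have hgood : g ∈ LinearMap.ker (tL F) ⊓ LinearMap.ker (dL F) :=
    (sup_le (TSz_le_good F h2) (Pspan_le_good F p hp)) hgmem
  have hgtau : (Phi F g).1 0 1 = 0 := hgood.1
  have hgdl : (Phi F g).1 0 0 - (Phi F g).1 1 1 = 0 := hgood.2
  have hid : f - g ∈ IdWith F (starUT F) := by
    rw [mem_IdWith_iff F h2]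
    apply Subtype.ext
    show (Phi F (f - g)).1 = (0 : Matrix (Fin 2) (Fin 2) (RR F))
    have hsub : (Phi F (f - g)).1 = (Phi F f).1 - (Phi F g).1 := by
      rw [map_sub]; rfl
    rw [hsub]
    refine Matrix.ext fun i j => ?_
    rw [Matrix.sub_apply, Matrix.zero_apply]
    fin_cases i <;> fin_cases j
    · show (Phi F f).1 0 0 - (Phi F g).1 0 0 = 0
      rw [show (Phi F g).1 0 0 = (Phi F f).1 0 0 from hgd', sub_self]
    · show (Phi F f).1 0 1 - (Phi F g).1 0 1 = 0
      rw [h01, hgtau, sub_self]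
    · show (Phi F f).1 1 0 - (Phi F g).1 1 0 = 0
      rw [UTR10, UTR10, sub_self]
    · show (Phi F f).1 1 1 - (Phi F g).1 1 1 = 0
      have e1 : (Phi F g).1 1 1 = (Phi F f).1 0 0 := by
        rw [← sub_eq_zero.mp hgdl]
        exact hgd'
      rw [e1, ← hd, sub_self]
  have m1 : f - g ∈ (IdWith F (starUT F) ⊔ TSz F) ⊔ Pspan F p :=
    Submodule.mem_sup_left (Submodule.mem_sup_left hid)
  have m2 : g ∈ (IdWith F (starUT F) ⊔ TSz F) ⊔ Pspan F p := by
    have hle : TSz F ⊔ Pspan F p ≤ (IdWith F (starUT F) ⊔ TSz F) ⊔ Pspan F p :=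
      sup_le (le_trans le_sup_right le_sup_left) le_sup_right
    exact hle hgmem
  have : f = (f - g) + g := (sub_add_cancel f g).symm
  rw [this]
  exact add_mem m1 m2

end Main


theorem stmt_10 (F : Type*) [Field F] [Infinite F] (p : ℕ) [CharP F p] (hp : 2 < p) :
    CWith F (starUT F) = IdWith F (starUT F) ⊔ TSz F ⊔
      Submodule.span F {f : FA F | ∃ g, IsSym F g ∧ f = g ^ p} := by
  have h2 : (2:F) ≠ 0 := by
    intro h
    have h' : ((2:ℕ):F) = 0 := by exact_mod_cast h
    have := Nat.le_of_dvd (by norm_num) ((CharP.cast_eq_zero_iff F p 2).mp h')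
    omega
  apply le_antisymm
  · exact fun f hf => hard_direction F p hp h2 f hf
  · apply sup_le
    · apply sup_le
      · intro f hf φ hφ
        rw [hf φ hφ]
        exact zero_mem _
      · intro f hf
        rw [mem_CWith_iff F h2]
        obtain ⟨k1, k2⟩ := Submodule.mem_inf.mp ((TSz_le_good F h2) hf)
        exact ⟨k1, sub_eq_zero.mp k2⟩
    · intro f hf
      rw [mem_CWith_iff F h2]
      obtain ⟨k1, k2⟩ := Submodule.mem_inf.mp ((Pspan_le_good F p hp) hf)
      exact ⟨k1, sub_eq_zero.mp k2⟩
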